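/- Define Q : ℝ² → ℝ² by Q(u) = (χ_A(u), χ_A(u)), where A = {u ∈ ℝ² : u₁ + u₂ > 0} ∪ {(0,0)} and χ_A is the indicator (value 1 on A, 0 otherwise). Then Q satisfies the law of demand, but the inverse image Q⁻¹((0,0)) is not convex. -/

import Mathlib

open scoped RealInnerProductSpace Classical

theorem stmt_6 (A : Set (EuclideanSpace ℝ (Fin 2)))
    (hA : A = {u : EuclideanSpace ℝ (Fin 2) | 0 < u 0 + u 1} ∪ {0})
    (Q : EuclideanSpace ℝ (Fin 2) → EuclideanSpace ℝ (Fin 2))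
    (hQ : ∀ u, Q u = WithLp.toLp 2 (fun _ => if u ∈ A then (1:ℝ) else 0)) :
    (∀ u w : EuclideanSpace ℝ (Fin 2), (0:ℝ) ≤ ⟪Q u - Q w, u - w⟫) ∧
    ¬ Convex ℝ {u : EuclideanSpace ℝ (Fin 2) | Q u = 0} := by
  have hmem : ∀ u : EuclideanSpace ℝ (Fin 2), u ∈ A ↔ 0 < u 0 + u 1 ∨ u = 0 := by
    intro u; rw [hA]; simp [Set.mem_union, or_comm]
  constructor
  · intro u w
    rw [PiLp.inner_apply]
    simp only [hQ, PiLp.sub_apply, RCLike.inner_apply, conj_trivial, Fin.sum_univ_two]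
    by_cases hu : u ∈ A <;> by_cases hw : w ∈ A <;> simp [hu, hw]
    · -- u ∈ A, w ∉ A
      have h1 : w 0 + w 1 ≤ 0 := by
        by_contra h; exact hw ((hmem w).2 (Or.inl (by linarith)))
      have h2 : 0 ≤ u 0 + u 1 := by
        rcases (hmem u).1 hu with h | h
        · linarith
        · simp [h]
      linarith
    · -- u ∉ A, w ∈ A
      have h1 : u 0 + u 1 ≤ 0 := by
        by_contra h; exact hu ((hmem u).2 (Or.inl (by linarith)))
      have h2 : 0 ≤ w 0 + w 1 := by
        rcases (hmem w).1 hw with h | h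
        · linarith
        · simp [h]
      linarith
  · intro hconv
    set a : EuclideanSpace ℝ (Fin 2) := WithLp.toLp 2 (fun i : Fin 2 => if i = 0 then (-1:ℝ) else 1) with ha
    set b : EuclideanSpace ℝ (Fin 2) := WithLp.toLp 2 (fun i : Fin 2 => if i = 0 then (1:ℝ) else -1) with hb
    have haA : a ∉ A := by
      rw [hmem]
      push_neg
      constructor
      · simp [ha]
      · intro h
        have := congrArg (fun v => v 0) h
        simp [ha] at this
    have hbA : b ∉ A := by
      rw [hmem]
      push_neg
      constructor
      · simp [hb]
      · intro h
        have := congrArg (fun v => v 0) h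
        simp [hb] at this
    have haQ : Q a = 0 := by
      rw [hQ]; ext i; simp [haA]
    have hbQ : Q b = 0 := by
      rw [hQ]; ext i; simp [hbA]
    have hmid := hconv (by simpa [Set.mem_setOf_eq] using haQ)
      (by simpa [Set.mem_setOf_eq] using hbQ)
      (by norm_num : (0:ℝ) ≤ 1/2) (by norm_num : (0:ℝ) ≤ 1/2) (by norm_num)
    have hzero : (1/2 : ℝ) • a + (1/2 : ℝ) • b = (0 : EuclideanSpace ℝ (Fin 2)) := by
      ext i
      show (1/2 : ℝ) * a i + (1/2 : ℝ) * b i = 0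
      fin_cases i <;> simp [ha, hb] <;> ring
    rw [Set.mem_setOf_eq, hzero, hQ] at hmid
    have h0A : (0 : EuclideanSpace ℝ (Fin 2)) ∈ A := (hmem 0).2 (Or.inr rfl)
    have := congrArg (fun v => v 0) hmid
    simp [h0A] at this
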